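/- Let (X, d) be a metric space such that every locally Lipschitz divergent path γ : [0,a) → X has infinite length. Then every Lipschitz path γ : [0,a) → X, with 0 < a < ∞, extends to a continuous path γ̄ : [0,a] → X. -/

import Mathlib

open scoped Topology ENNReal NNReal
open Set

noncomputable section

/-- A path `γ : [a,b) → X` is divergent if it eventually leaves every compact subset of `X`. -/
def IsDivergentPathOn {X : Type*} [TopologicalSpace X] (γ : ℝ → X) (a b : ℝ) : Prop :=
  ∀ K : Set X, IsCompact K → ∃ T : ℝ, a ≤ T ∧ T < b ∧ ∀ t : ℝ, T ≤ t → t < b → γ t ∉ K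

lemma evar_le_of_lipschitz {X : Type*} [MetricSpace X] {γ : ℝ → X} {a : ℝ} {C : ℝ≥0}
    (hγ : LipschitzOnWith C γ (Set.Ico 0 a)) :
    eVariationOn γ (Set.Ico 0 a) ≤ ENNReal.ofReal (C * a) := by
  apply iSup_le
  rintro ⟨n, u, hu, us⟩
  calc ∑ i ∈ Finset.range n, edist (γ (u (i + 1))) (γ (u i))
      ≤ ∑ i ∈ Finset.range n, ENNReal.ofReal (C * (u (i+1) - u i)) := by
        apply Finset.sum_le_sum
        intro i _
        have hd := hγ.dist_le_mul (u (i+1)) (us (i+1)) (u i) (us i)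
        rw [Real.dist_eq, abs_of_nonneg (sub_nonneg.2 (hu (Nat.le_succ i)))] at hd
        rw [edist_dist]
        exact ENNReal.ofReal_le_ofReal hd
    _ = ENNReal.ofReal (∑ i ∈ Finset.range n, C * (u (i+1) - u i)) := by
        rw [ENNReal.ofReal_sum_of_nonneg]
        intro i _
        exact mul_nonneg C.coe_nonneg (sub_nonneg.2 (hu (Nat.le_succ i)))
    _ ≤ ENNReal.ofReal (C * a) := by
        apply ENNReal.ofReal_le_ofReal
        rw [← Finset.mul_sum, Finset.sum_range_sub (fun i => u i)]
        apply mul_le_mul_of_nonneg_left _ C.coe_nonneg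
        have h0 : 0 ≤ u 0 := (us 0).1
        have hn : u n < a := (us n).2
        have h01 : u 0 ≤ u n := hu (Nat.zero_le n)
        linarith

/-- Let `(X, d)` be a metric space such that every locally Lipschitz divergent
path `γ : [0,a) → X` has infinite length. Then every Lipschitz path `γ : [0,a) → X`, with
`0 < a < ∞`, extends to a continuous path `γ̄ : [0,a] → X`. -/
theorem lipschitz_path_extends_of_divergent_paths_complete
    {X : Type*} [MetricSpace X]
    (h : ∀ (a : ℝ) (γ : ℝ → X), 0 < a → LocallyLipschitzOn (Set.Ico 0 a) γ →
      IsDivergentPathOn γ 0 a → eVariationOn γ (Set.Ico 0 a) = ⊤)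
    (a : ℝ) (ha : 0 < a) (γ : ℝ → X) (C : ℝ)
    (hγ : ∀ s ∈ Set.Ico 0 a, ∀ t ∈ Set.Ico 0 a, dist (γ s) (γ t) ≤ C * |s - t|) :
    ∃ γbar : ℝ → X, ContinuousOn γbar (Set.Icc 0 a) ∧ ∀ t ∈ Set.Ico 0 a, γbar t = γ t := by
  -- γ is Lipschitz with constant C' = max C 0
  set C' : ℝ≥0 := Real.toNNReal C with hC'
  have hlip : LipschitzOnWith C' γ (Set.Ico 0 a) := by
    apply LipschitzOnWith.of_dist_le_mul
    intro s hs t ht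
    calc dist (γ s) (γ t) ≤ C * |s - t| := hγ s hs t ht
      _ ≤ (C' : ℝ) * |s - t| :=
          mul_le_mul_of_nonneg_right (Real.le_coe_toNNReal C) (abs_nonneg _)
      _ = (C' : ℝ) * dist s t := by rw [Real.dist_eq]
  -- finite variation
  have hvar : eVariationOn γ (Set.Ico 0 a) ≠ ⊤ :=
    ne_top_of_le_ne_top ENNReal.ofReal_ne_top (evar_le_of_lipschitz hlip)
  -- not divergent
  have hloclip : LocallyLipschitzOn (Set.Ico 0 a) γ := fun x hx =>
    ⟨C', Set.Ico 0 a, self_mem_nhdsWithin, hlip⟩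
  have hnd : ¬ IsDivergentPathOn γ 0 a := fun hd => hvar (h a γ ha hloclip hd)
  simp only [IsDivergentPathOn, not_forall, not_exists] at hnd
  obtain ⟨K, hK, hKT⟩ := hnd
  -- extract sequence in K converging to a point x
  have hseq : ∀ n : ℕ, ∃ t : ℝ, max 0 (a - 1/(n+1)) ≤ t ∧ t < a ∧ γ t ∈ K := by
    intro n
    have hT : max 0 (a - 1/(n+1)) < a := by
      apply max_lt ha
      have : (0:ℝ) < 1/(n+1) := by positivity
      linarith
    have := hKT (max 0 (a - 1/(n+1)))
    push_neg at this
    obtain ⟨t, ht1, ht2, ht3⟩ := this (le_max_left _ _) hT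
    exact ⟨t, ht1, ht2, ht3⟩
  choose u hu1 hu2 hu3 using hseq
  obtain ⟨x, -, φ, hφ, hx⟩ := hK.tendsto_subseq hu3
  -- the extension
  refine ⟨fun t => if t = a then x else γ t, ?_, ?_⟩
  swap
  · intro t ht
    simp [ne_of_lt ht.2]
  intro t ht
  rcases lt_or_eq_of_le ht.2 with htlt | hteq
  · -- t < a : continuity from Lipschitz
    have hcont : ContinuousWithinAt γ (Set.Ico 0 a) t :=
      hlip.continuousOn.continuousWithinAt ⟨ht.1, htlt⟩
    have hmem : Set.Ico 0 a ∈ 𝓝[Set.Icc 0 a] t := by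
      apply Filter.mem_of_superset (inter_mem_nhdsWithin _ (Iio_mem_nhds htlt))
      rintro y ⟨hy1, hy2⟩
      exact ⟨hy1.1, hy2⟩
    have hc2 : ContinuousWithinAt γ (Set.Icc 0 a) t := hcont.mono_of_mem_nhdsWithin hmem
    apply hc2.congr_of_eventuallyEq
    · filter_upwards [hmem] with y hy
      simp [ne_of_lt hy.2]
    · simp [ne_of_lt htlt]
  · -- t = a
    rw [hteq]
    have key : Filter.Tendsto γ (𝓝[Set.Ico 0 a] a) (𝓝 x) := by
      rw [Metric.tendsto_nhds]
      intro ε hε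
      have h1 : Filter.Tendsto (fun n : ℕ => (C' : ℝ) * (1/(n+1))) Filter.atTop (𝓝 0) := by
        have := tendsto_one_div_add_atTop_nhds_zero_nat (𝕜 := ℝ)
        simpa using this.const_mul (C' : ℝ)
      have h2 := (Metric.tendsto_nhds.1 hx) (ε/2) (by linarith)
      rw [NormedAddCommGroup.tendsto_nhds_zero] at h1
      obtain ⟨n, hn1, hn2⟩ := ((h1 (ε/2) (by linarith)).and h2).exists
      set m := φ n with hm
      have hφn : (n:ℝ) ≤ (m:ℝ) := Nat.cast_le.mpr (hφ.id_le n)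
      filter_upwards [inter_mem_nhdsWithin (Set.Ico 0 a)
        (Ioi_mem_nhds (show a - 1/((m:ℝ)+1) < a by
          have : (0:ℝ) < 1/((m:ℝ)+1) := by positivity
          linarith))] with s hs
      obtain ⟨hs1, hs2⟩ := hs
      have hum : a - 1/((m:ℝ)+1) ≤ u m := le_trans (le_max_right _ _) (hu1 m)
      have hdist : dist s (u m) ≤ 1/((m:ℝ)+1) := by
        rw [Real.dist_eq, abs_le]
        have h3 := hu2 m
        have h4 := hs1.2
        simp only [Set.mem_Ioi] at hs2
        constructor <;> linarith
      have hd1 : dist (γ s) (γ (u m)) ≤ (C' : ℝ) * (1/((m:ℝ)+1)) := by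
        have := hlip.dist_le_mul s hs1 (u m) ⟨le_trans (le_max_left _ _) (hu1 m), hu2 m⟩
        exact le_trans this (mul_le_mul_of_nonneg_left hdist C'.coe_nonneg)
      have hd2 : dist (γ (u m)) x < ε/2 := hn2
      have hbound : (C' : ℝ) * (1/((m:ℝ)+1)) < ε/2 := by
        have hmono : (C' : ℝ) * (1/((m:ℝ)+1)) ≤ (C' : ℝ) * (1/((n:ℝ)+1)) := by
          apply mul_le_mul_of_nonneg_left _ C'.coe_nonneg
          apply div_le_div_of_nonneg_left one_pos.le (by positivity)
          linarith
        have habs : ‖(C' : ℝ) * (1/((n:ℝ)+1))‖ < ε/2 := hn1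
        rw [Real.norm_eq_abs, abs_of_nonneg (by positivity)] at habs
        linarith
      calc dist (γ s) x ≤ dist (γ s) (γ (u m)) + dist (γ (u m)) x := dist_triangle _ _ _
        _ < ε/2 + ε/2 := by linarith
        _ = ε := by ring
    have hsplit : (𝓝[Set.Icc 0 a] a) = (𝓝[Set.Ico 0 a] a) ⊔ (𝓝[{a}] a) := by
      rw [← nhdsWithin_union, Set.Ico_union_right ha.le]
    unfold ContinuousWithinAt
    rw [hsplit]
    simp only [if_pos rfl]
    rw [Filter.tendsto_sup]
    constructor
    · apply Filter.Tendsto.congr' _ key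
      filter_upwards [self_mem_nhdsWithin] with y hy
      simp [ne_of_lt hy.2]
    · rw [nhdsWithin_singleton]
      rw [Filter.tendsto_pure_left]
      intro s hs
      simpa using mem_of_mem_nhds hs

end
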